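/- For every δ ∈ (0, 1), for every probability space (Ω, F, P), every event A ∈ F, and all sub-σ-fields G and H of F, with X = E[1_A | G] and Y = E[1_A | H], one has P(|X − Y| ≥ 1 − δ) ≤ 2δ. -/

import Mathlib

open MeasureTheory

lemma pitman_aux {δ : ℝ} (hδ0 : 0 < δ) (hδ2 : δ < 1/2)
    {Ω : Type} {F : MeasurableSpace Ω} (P : Measure Ω) [IsProbabilityMeasure P]
    (A : Set Ω) (hA : MeasurableSet A)
    (K : MeasurableSpace Ω) (hK : K ≤ F) :
    P (Aᶜ ∩ {ω | 1 - δ ≤ (P[A.indicator (fun _ => (1 : ℝ)) | K]) ω}) +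
    P (A ∩ {ω | (P[A.indicator (fun _ => (1 : ℝ)) | K]) ω ≤ δ}) ≤ ENNReal.ofReal δ := by
  letI : MeasurableSpace Ω := F
  set f : Ω → ℝ := A.indicator (fun _ => (1 : ℝ)) with hfdef
  set Z : Ω → ℝ := P[f | K] with hZdef
  have hf : Integrable f P := (integrable_const (1 : ℝ)).indicator hA
  have hZsm : StronglyMeasurable[K] Z := stronglyMeasurable_condExp
  set B : Set Ω := {ω | 1 - δ ≤ Z ω} with hBdef
  set C : Set Ω := {ω | Z ω ≤ δ} with hCdef
  have hBK : MeasurableSet[K] B := hZsm.measurable measurableSet_Ici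
  have hCK : MeasurableSet[K] C := hZsm.measurable measurableSet_Iic
  have hB : MeasurableSet B := hK _ hBK
  have hC : MeasurableSet C := hK _ hCK
  -- integral identities
  have hintB : ∫ ω in B, Z ω ∂P = (P (B ∩ A)).toReal := by
    rw [setIntegral_condExp hK hf hBK]
    simp [hfdef, MeasureTheory.setIntegral_indicator hA, Measure.real]
  have hintC : ∫ ω in C, Z ω ∂P = (P (C ∩ A)).toReal := by
    rw [setIntegral_condExp hK hf hCK]
    simp [hfdef, MeasureTheory.setIntegral_indicator hA, Measure.real]
  -- lower bound on B
  have hlow : (1 - δ) * (P B).toReal ≤ (P (B ∩ A)).toReal := by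
    rw [← hintB]
    exact setIntegral_ge_of_const_le_real hB (measure_ne_top _ _) (fun x hx => hx)
      integrable_condExp.integrableOn
  -- upper bound on C
  have hup : (P (C ∩ A)).toReal ≤ δ * (P C).toReal := by
    rw [← hintC]
    calc ∫ ω in C, Z ω ∂P ≤ ∫ _ω in C, δ ∂P :=
          setIntegral_mono_on integrable_condExp.integrableOn
            (integrableOn_const (measure_ne_top _ _)) hC (fun x hx => hx)
      _ = δ * (P C).toReal := by simp [mul_comm, Measure.real]
  have hdiff : (P (B \ A)).toReal ≤ δ * (P B).toReal := by
    have h1 : P (B ∩ A) + P (B \ A) = P B := measure_inter_add_diff B hA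
    have h2 : (P (B ∩ A)).toReal + (P (B \ A)).toReal = (P B).toReal := by
      rw [← ENNReal.toReal_add (measure_ne_top _ _) (measure_ne_top _ _), h1]
    nlinarith [hlow]
  -- disjointness of B and C
  have hdisj : Disjoint B C := by
    rw [Set.disjoint_left]
    intro ω hωB hωC
    simp only [hBdef, hCdef, Set.mem_setOf_eq] at hωB hωC
    linarith
  have hsum : (P B).toReal + (P C).toReal ≤ 1 := by
    rw [← ENNReal.toReal_add (measure_ne_top _ _) (measure_ne_top _ _),
      ← measure_union hdisj hC]
    exact ENNReal.toReal_le_of_le_ofReal one_pos.le (by simpa using prob_le_one)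
  have hAcB : Aᶜ ∩ B = B \ A := by ext ω; simp [Set.mem_diff, and_comm]
  have hAC : A ∩ C = C ∩ A := Set.inter_comm _ _
  rw [hAcB, hAC, ← ENNReal.ofReal_toReal (measure_ne_top P (B \ A)),
    ← ENNReal.ofReal_toReal (measure_ne_top P (C ∩ A)), ← ENNReal.ofReal_add
    ENNReal.toReal_nonneg ENNReal.toReal_nonneg]
  apply ENNReal.ofReal_le_ofReal
  have hbnn : (0:ℝ) ≤ (P B).toReal := ENNReal.toReal_nonneg
  have hcnn : (0:ℝ) ≤ (P C).toReal := ENNReal.toReal_nonneg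
  nlinarith [hdiff, hup]

/-- Pitman's upper bound: for every δ ∈ (0, 1), P(|X − Y| ≥ 1 − δ) ≤ 2δ where
X = E[1_A | G] and Y = E[1_A | H]. -/
theorem contradictory_predictions_pitman_upper_bound
    {δ : ℝ} (hδ0 : 0 < δ) (hδ1 : δ < 1)
    {Ω : Type} {F : MeasurableSpace Ω} (P : Measure Ω) [IsProbabilityMeasure P]
    (A : Set Ω) (hA : MeasurableSet A)
    (G H : MeasurableSpace Ω) (hG : G ≤ F) (hH : H ≤ F) :
    P {ω | 1 - δ ≤ |(P[A.indicator (fun _ => (1 : ℝ)) | G]) ω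
        - (P[A.indicator (fun _ => (1 : ℝ)) | H]) ω|}
      ≤ ENNReal.ofReal (2 * δ) := by
  letI : MeasurableSpace Ω := F
  by_cases hhalf : (1:ℝ) ≤ 2 * δ
  · calc P _ ≤ 1 := prob_le_one
      _ = ENNReal.ofReal 1 := by simp
      _ ≤ ENNReal.ofReal (2 * δ) := ENNReal.ofReal_le_ofReal hhalf
  push_neg at hhalf
  have hδ2 : δ < 1/2 := by linarith
  set f : Ω → ℝ := A.indicator (fun _ => (1 : ℝ)) with hfdef
  have hf : Integrable f P := (integrable_const (1 : ℝ)).indicator hA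
  set X : Ω → ℝ := P[f | G] with hXdef
  set Y : Ω → ℝ := P[f | H] with hYdef
  have hf01 : ∀ ω, 0 ≤ f ω ∧ f ω ≤ 1 := by
    intro ω
    by_cases h : ω ∈ A <;> simp [hfdef, Set.indicator_apply, h] <;> norm_num
  have hX0 : ∀ᵐ ω ∂P, 0 ≤ X ω := condExp_nonneg (Filter.Eventually.of_forall fun ω => (hf01 ω).1)
  have hY0 : ∀ᵐ ω ∂P, 0 ≤ Y ω := condExp_nonneg (Filter.Eventually.of_forall fun ω => (hf01 ω).1)
  have hX1 : ∀ᵐ ω ∂P, X ω ≤ 1 := by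
    have := condExp_mono (m := G) hf (integrable_const (1:ℝ))
      (Filter.Eventually.of_forall fun ω => (hf01 ω).2)
    rw [condExp_const hG] at this
    exact this
  have hY1 : ∀ᵐ ω ∂P, Y ω ≤ 1 := by
    have := condExp_mono (m := H) hf (integrable_const (1:ℝ))
      (Filter.Eventually.of_forall fun ω => (hf01 ω).2)
    rw [condExp_const hH] at this
    exact this
  set S : Set Ω := (Aᶜ ∩ {ω | 1 - δ ≤ X ω}) ∪ (A ∩ {ω | Y ω ≤ δ}) ∪
      ((Aᶜ ∩ {ω | 1 - δ ≤ Y ω}) ∪ (A ∩ {ω | X ω ≤ δ})) with hSdef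
  have hsub : {ω | 1 - δ ≤ |X ω - Y ω|} ≤ᵐ[P] S := by
    filter_upwards [hX0, hX1, hY0, hY1] with ω hx0 hx1 hy0 hy1 hω
    replace hω : 1 - δ ≤ |X ω - Y ω| := hω
    simp only [hSdef, Set.mem_union, Set.mem_inter_iff, Set.mem_compl_iff, Set.mem_setOf_eq]
    by_cases hcase : 1 - δ ≤ X ω - Y ω
    · have hxB : 1 - δ ≤ X ω := by linarith
      have hyC : Y ω ≤ δ := by linarith
      by_cases hωA : ω ∈ A
      · exact Or.inl (Or.inr ⟨hωA, hyC⟩)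
      · exact Or.inl (Or.inl ⟨hωA, hxB⟩)
    · have hcase2 : 1 - δ ≤ Y ω - X ω := by
        rcases abs_cases (X ω - Y ω) with ⟨h, _⟩ | ⟨h, _⟩ <;> linarith
      have hyB : 1 - δ ≤ Y ω := by linarith
      have hxC : X ω ≤ δ := by linarith
      by_cases hωA : ω ∈ A
      · exact Or.inr (Or.inr ⟨hωA, hxC⟩)
      · exact Or.inr (Or.inl ⟨hωA, hyB⟩)
  calc P {ω | 1 - δ ≤ |X ω - Y ω|} ≤ P S := measure_mono_ae hsub
    _ ≤ P ((Aᶜ ∩ {ω | 1 - δ ≤ X ω}) ∪ (A ∩ {ω | Y ω ≤ δ})) +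
        P ((Aᶜ ∩ {ω | 1 - δ ≤ Y ω}) ∪ (A ∩ {ω | X ω ≤ δ})) := measure_union_le _ _
    _ ≤ (P (Aᶜ ∩ {ω | 1 - δ ≤ X ω}) + P (A ∩ {ω | Y ω ≤ δ})) +
        (P (Aᶜ ∩ {ω | 1 - δ ≤ Y ω}) + P (A ∩ {ω | X ω ≤ δ})) :=
      add_le_add (measure_union_le _ _) (measure_union_le _ _)
    _ ≤ (P (Aᶜ ∩ {ω | 1 - δ ≤ X ω}) + P (A ∩ {ω | X ω ≤ δ})) +
        (P (Aᶜ ∩ {ω | 1 - δ ≤ Y ω}) + P (A ∩ {ω | Y ω ≤ δ})) := by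
      ring_nf; exact le_of_eq (by ring)
    _ ≤ ENNReal.ofReal δ + ENNReal.ofReal δ :=
      add_le_add (pitman_aux hδ0 hδ2 P A hA G hG) (pitman_aux hδ0 hδ2 P A hA H hH)
    _ = ENNReal.ofReal (2 * δ) := by
      rw [← ENNReal.ofReal_add hδ0.le hδ0.le]; ring_nf
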